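/- Let r ≥ 3 be an integer and let Q be a homogeneous real polynomial in the variables x₁, …, x_{2r} all of whose coefficients are nonnegative and with n(Q) ≥ 2. Then the polynomial P = (x₁ + ⋯ + x_r − x_{r+1} − ⋯ − x_{2r}) · Q satisfies n(P) ≥ 2r + 3; in particular n(P) > 2r + 2. -/

import Mathlib

open MvPolynomial

namespace Statement7Aux

noncomputable section

variable {N : ℕ}

def ee (i : Fin N) : Fin N →₀ ℕ := Finsupp.single i 1

def Wt (pos : Fin N → Prop) [DecidablePred pos] (k : Fin N) : ℕ :=
  (if pos k then N else 0) + k.val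

def psi (pos : Fin N → Prop) [DecidablePred pos] (m : Fin N →₀ ℕ) : ℕ :=
  ∑ k : Fin N, m k * Wt pos k

lemma psi_add (pos : Fin N → Prop) [DecidablePred pos] (x y : Fin N →₀ ℕ) :
    psi pos (x + y) = psi pos x + psi pos y := by
  simp [psi, Finsupp.add_apply, add_mul, Finset.sum_add_distrib]

lemma psi_ee (pos : Fin N → Prop) [DecidablePred pos] (i : Fin N) :
    psi pos (ee i) = Wt pos i := by
  simp [psi, ee, Finsupp.single_apply]

lemma Wt_lt (pos : Fin N → Prop) [DecidablePred pos] {i j : Fin N}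
    (hi : pos i) (hj : ¬ pos j) : Wt pos j < Wt pos i := by
  have h1 : (j : ℕ) < N := j.isLt
  simp only [Wt, hi, hj, if_true, if_false, zero_add]
  omega

lemma Wt_inj (pos : Fin N → Prop) [DecidablePred pos] {i j : Fin N}
    (h : Wt pos i = Wt pos j) : i = j := by
  have h1 : (i : ℕ) < N := i.isLt
  have h2 : (j : ℕ) < N := j.isLt
  by_cases hi : pos i <;> by_cases hj : pos j <;>
    simp only [Wt, hi, hj, if_true, if_false, zero_add] at h <;>
    · exact Fin.ext (by omega)

lemma ee_inj {i j : Fin N} (h : ee i = ee j) : i = j := by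
  rcases (Finsupp.single_eq_single_iff _ _ _ _).mp h with ⟨h1, _⟩ | ⟨h1, _⟩
  · exact h1
  · exact absurd h1 one_ne_zero

lemma ee_add_ee_apply (i j k : Fin N) :
    (ee i + ee j) k = (if i = k then 1 else 0) + (if j = k then 1 else 0) := by
  simp [ee, Finsupp.add_apply, Finsupp.single_apply]

lemma coeff_L_mul (pos : Fin N → Prop) [DecidablePred pos]
    (Q : MvPolynomial (Fin N) ℝ) (d : Fin N →₀ ℕ) :
    ((∑ k : Fin N, C (if pos k then (1:ℝ) else -1) * X k) * Q).coeff d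
      = ∑ k : Fin N, (if pos k then (1:ℝ) else -1) * ((X k * Q).coeff d) := by
  rw [Finset.sum_mul, coeff_sum]
  refine Finset.sum_congr rfl fun k _ => ?_
  rw [mul_assoc, coeff_C_mul]

lemma point_pos (pos : Fin N → Prop) [DecidablePred pos]
    (Q : MvPolynomial (Fin N) ℝ) (hnn : ∀ d, 0 ≤ Q.coeff d)
    {i : Fin N} (hi : pos i) {s : Fin N →₀ ℕ} (hs : s ∈ Q.support)
    (H : ∀ j, ¬ pos j → ∀ t ∈ Q.support, t + ee j ≠ ee i + s) :
    0 < ((∑ k : Fin N, C (if pos k then (1:ℝ) else -1) * X k) * Q).coeff (ee i + s) := by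
  classical
  rw [coeff_L_mul]
  refine Finset.sum_pos' (fun k _ => ?_) ⟨i, Finset.mem_univ i, ?_⟩
  · by_cases hk : pos k
    · simp only [hk, if_true, one_mul]
      rw [coeff_X_mul']
      split
      · exact hnn _
      · exact le_refl 0
    · have hT : (X k * Q).coeff (ee i + s) = 0 := by
        rw [coeff_X_mul']
        split
        next hmem =>
          by_contra hne
          have ht : (ee i + s) - Finsupp.single k 1 ∈ Q.support := mem_support_iff.mpr hne
          refine H k hk _ ht ?_
          have hle : Finsupp.single k 1 ≤ ee i + s := by
            rw [Finsupp.single_le_iff]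
            have : (ee i + s) k ≠ 0 := Finsupp.mem_support_iff.mp hmem
            omega
          show ((ee i + s) - Finsupp.single k 1) + ee k = ee i + s
          exact tsub_add_cancel_of_le hle
        · rfl
      rw [hT, mul_zero]
  · have hmem : i ∈ (ee i + s).support := by
      rw [Finsupp.mem_support_iff]
      simp [ee, Finsupp.add_apply, Finsupp.single_apply]
    have hco : (X i * Q).coeff (ee i + s) = Q.coeff s := by
      rw [coeff_X_mul', if_pos hmem]
      congr 1
      show (ee i + s) - ee i = s
      exact add_tsub_cancel_left _ _
    rw [if_pos hi, one_mul, hco]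
    exact lt_of_le_of_ne (hnn s) (Ne.symm (mem_support_iff.mp hs))

lemma core (pos : Fin N → Prop) [DecidablePred pos]
    (Q : MvPolynomial (Fin N) ℝ)
    (hnn : ∀ d, 0 ≤ Q.coeff d) (hS : 2 ≤ Q.support.card) :
    ∃ F : Finset (Fin N →₀ ℕ),
      2 * (Finset.univ.filter pos).card ≤ F.card + 1 ∧
      ∀ d ∈ F, 0 < ((∑ k : Fin N, C (if pos k then (1:ℝ) else -1) * X k) * Q).coeff d := by
  classical
  set S := Q.support with hSdef
  set posF := Finset.univ.filter pos with hposFdef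
  set a := posF.card with hadef
  have hposmem : ∀ i ∈ posF, pos i := fun i hi => (Finset.mem_filter.mp hi).2
  rcases posF.eq_empty_or_nonempty with hpe | hpne
  · refine ⟨∅, ?_, by simp⟩
    simp [hadef, hpe]
  have hSne : S.Nonempty := Finset.card_pos.mp (by omega)
  obtain ⟨s1, hs1S, hmax1⟩ := S.exists_max_image (psi pos) hSne
  set M1 := psi pos s1 with hM1
  have Htop : ∀ (i : Fin N), pos i → ∀ (s : Fin N →₀ ℕ), s ∈ S → psi pos s = M1 →
      ∀ j, ¬ pos j → ∀ t ∈ S, t + ee j ≠ ee i + s := by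
    intro i hi s hsS hsM j hj t htS heq
    have h1 : psi pos t + Wt pos j = Wt pos i + M1 := by
      have h0 := congrArg (psi pos) heq
      rwa [psi_add, psi_add, psi_ee, psi_ee, hsM] at h0
    have h2 : psi pos t ≤ M1 := hmax1 t htS
    have h3 : Wt pos j < Wt pos i := Wt_lt pos hi hj
    omega
  have hinj : ∀ (M : ℕ) (p q : Fin N × (Fin N →₀ ℕ)),
      pos p.1 → pos q.1 → psi pos p.2 = M → psi pos q.2 = M →
      ee p.1 + p.2 = ee q.1 + q.2 → p = q := by
    intro M p q hp hq hpM hqM heq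
    have h1 : Wt pos p.1 + M = Wt pos q.1 + M := by
      have h0 := congrArg (psi pos) heq
      rwa [psi_add, psi_add, psi_ee, psi_ee, hpM, hqM] at h0
    have h2 : p.1 = q.1 := Wt_inj pos (by omega)
    rw [h2] at heq
    exact Prod.ext h2 (add_left_cancel heq)
  set S1 := S.filter (fun t => psi pos t = M1) with hS1def
  have hs1S1 : s1 ∈ S1 := Finset.mem_filter.mpr ⟨hs1S, rfl⟩
  by_cases hA : 2 ≤ S1.card
  · -- Case A : at least two maximizers
    refine ⟨(posF ×ˢ S1).image (fun p => ee p.1 + p.2), ?_, ?_⟩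
    · have hcard : ((posF ×ˢ S1).image (fun p => ee p.1 + p.2)).card = a * S1.card := by
        rw [Finset.card_image_of_injOn, Finset.card_product]
        intro p hp q hq heq
        have hp' := Finset.mem_product.mp hp
        have hq' := Finset.mem_product.mp hq
        exact hinj M1 p q (hposmem _ hp'.1) (hposmem _ hq'.1)
          (Finset.mem_filter.mp hp'.2).2 (Finset.mem_filter.mp hq'.2).2 heq
      rw [hcard]
      have h1 : a * 2 ≤ a * S1.card := Nat.mul_le_mul_left a hA
      have h2 : 1 ≤ a := Finset.card_pos.mpr hpne
      omega
    · intro d hd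
      obtain ⟨p, hp, rfl⟩ := Finset.mem_image.mp hd
      have hp' := Finset.mem_product.mp hp
      have hsS : p.2 ∈ S := (Finset.mem_filter.mp hp'.2).1
      exact point_pos pos Q hnn (hposmem _ hp'.1) hsS
        (Htop p.1 (hposmem _ hp'.1) p.2 hsS (Finset.mem_filter.mp hp'.2).2)
  · -- Case B : unique maximizer s1
    have hS1card : S1.card = 1 := by
      have : 1 ≤ S1.card := Finset.card_pos.mpr ⟨s1, hs1S1⟩
      omega
    have huniq : ∀ t ∈ S, psi pos t = M1 → t = s1 := by
      intro t ht hM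
      exact Finset.card_le_one.mp (le_of_eq hS1card) t (Finset.mem_filter.mpr ⟨ht, hM⟩) s1 hs1S1
    set S' := S.erase s1 with hS'def
    have hS'ne : S'.Nonempty := by
      rw [← Finset.card_pos, Finset.card_erase_of_mem hs1S]
      omega
    obtain ⟨s2, hs2S', hmax2⟩ := S'.exists_max_image (psi pos) hS'ne
    set M2 := psi pos s2 with hM2def
    have hs2ne : s2 ≠ s1 := Finset.ne_of_mem_erase hs2S'
    have hM2lt : M2 < M1 := by
      have h1 : psi pos s2 ≤ M1 := hmax1 _ (Finset.mem_of_mem_erase hs2S')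
      rcases lt_or_eq_of_le h1 with h | h
      · exact h
      · exact absurd (huniq _ (Finset.mem_of_mem_erase hs2S') h) hs2ne
    have hkey : ∀ t ∈ S, M2 < psi pos t → t = s1 := by
      intro t ht hgt
      by_contra hne
      exact absurd (hmax2 t (Finset.mem_erase.mpr ⟨hne, ht⟩)) (by omega)
    set S2 := S'.filter (fun t => psi pos t = M2) with hS2def
    have hs2S2 : s2 ∈ S2 := Finset.mem_filter.mpr ⟨hs2S', rfl⟩
    have hS2subS : ∀ t ∈ S2, t ∈ S := fun t ht =>
      Finset.mem_of_mem_erase (Finset.mem_filter.mp ht).1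
    have hS2ne_s1 : ∀ t ∈ S2, t ≠ s1 := fun t ht =>
      Finset.ne_of_mem_erase (Finset.mem_filter.mp ht).1
    have hS2psi : ∀ t ∈ S2, psi pos t = M2 := fun t ht => (Finset.mem_filter.mp ht).2
    set Good := (posF ×ˢ S2).filter
      (fun p => ∀ j, ¬ pos j → ee p.1 + p.2 ≠ ee j + s1) with hGooddef
    set Bad := (posF ×ˢ S2).filter
      (fun p => ¬ ∀ j, ¬ pos j → ee p.1 + p.2 ≠ ee j + s1) with hBaddef
    have hGB : Good.card + Bad.card = a * S2.card := by
      rw [hGooddef, hBaddef, Finset.card_filter_add_card_filter_not,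
        Finset.card_product]
    have hGoodH : ∀ p ∈ Good, ∀ j, ¬ pos j → ∀ t ∈ S, t + ee j ≠ ee p.1 + p.2 := by
      intro p hp j hj t htS heq
      obtain ⟨hpmem, hpgood⟩ := Finset.mem_filter.mp hp
      have hppos : pos p.1 := hposmem _ (Finset.mem_product.mp hpmem).1
      have hpM : psi pos p.2 = M2 := hS2psi _ (Finset.mem_product.mp hpmem).2
      have h1 : psi pos t + Wt pos j = Wt pos p.1 + M2 := by
        have h0 := congrArg (psi pos) heq
        rwa [psi_add, psi_add, psi_ee, psi_ee, hpM] at h0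
      have h3 : Wt pos j < Wt pos p.1 := Wt_lt pos hppos hj
      have h4 : M2 < psi pos t := by
        by_contra hle
        have : psi pos t ≤ M2 := by omega
        omega
      have h5 : t = s1 := hkey t htS h4
      rw [h5] at heq
      exact hpgood j hj (heq.symm.trans (add_comm s1 (ee j)))
    have hGoodPos : ∀ p ∈ Good,
        0 < ((∑ k : Fin N, C (if pos k then (1:ℝ) else -1) * X k) * Q).coeff (ee p.1 + p.2) := by
      intro p hp
      have hpmem := (Finset.mem_filter.mp hp).1
      have hppos : pos p.1 := hposmem _ (Finset.mem_product.mp hpmem).1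
      have hsS : p.2 ∈ S := hS2subS _ (Finset.mem_product.mp hpmem).2
      exact point_pos pos Q hnn hppos hsS (hGoodH p hp)
    have hGoodInj : Set.InjOn (fun (p : Fin N × (Fin N →₀ ℕ)) => ee p.1 + p.2) ↑Good := by
      intro p hp q hq heq
      have hpmem := (Finset.mem_filter.mp hp).1
      have hqmem := (Finset.mem_filter.mp hq).1
      exact hinj M2 p q (hposmem _ (Finset.mem_product.mp hpmem).1)
        (hposmem _ (Finset.mem_product.mp hqmem).1)
        (hS2psi _ (Finset.mem_product.mp hpmem).2)
        (hS2psi _ (Finset.mem_product.mp hqmem).2) heq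
    have hBadcard : Bad.card ≤ S2.card := by
      refine Finset.card_le_card_of_injOn Prod.snd (fun p hp => ?_) ?_
      · exact (Finset.mem_product.mp (Finset.mem_filter.mp hp).1).2
      · intro p hp q hq heq2
        obtain ⟨hpmem, hpbad⟩ := Finset.mem_filter.mp hp
        obtain ⟨hqmem, hqbad⟩ := Finset.mem_filter.mp hq
        push_neg at hpbad hqbad
        obtain ⟨j, hj, hpe⟩ := hpbad
        obtain ⟨j', hj', hqe⟩ := hqbad
        have hppos : pos p.1 := hposmem _ (Finset.mem_product.mp hpmem).1
        have hqpos : pos q.1 := hposmem _ (Finset.mem_product.mp hqmem).1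
        -- hpe : ee p.1 + p.2 = ee j + s1 ; hqe : ee q.1 + q.2 = ee j' + s1 ; heq2 : p.2 = q.2
        have hqe2 : ee q.1 + p.2 = ee j' + s1 := by rw [heq2]; exact hqe
        have hcomb : ee p.1 + ee j' = ee q.1 + ee j := by
          have h2 : ee p.1 + ee j' + s1 = ee q.1 + ee j + s1 := by
            rw [add_assoc, ← hqe2, add_assoc, ← hpe, add_left_comm]
          exact add_right_cancel h2
        have hjne : j ≠ p.1 := fun h => hj (h ▸ hppos)
        have hj'ne : j' ≠ p.1 := fun h => hj' (h ▸ hppos)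
        have heval := DFunLike.congr_fun hcomb p.1
        rw [ee_add_ee_apply, ee_add_ee_apply] at heval
        have hq1 : q.1 = p.1 := by
          by_contra hne
          simp [hjne, hj'ne, hne] at heval
        exact Prod.ext hq1.symm heq2
    by_cases hB1 : 2 ≤ S2.card
    · -- Subcase B1 : at least two second-layer elements
      obtain ⟨itop, hitopF, hitopmax⟩ := posF.exists_max_image (Wt pos) hpne
      have hitoppos : pos itop := hposmem _ hitopF
      set F2 := Good.image (fun (p : Fin N × (Fin N →₀ ℕ)) => ee p.1 + p.2) with hF2def
      have hF2card : F2.card = Good.card := Finset.card_image_of_injOn hGoodInj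
      have hdtop : (ee itop + s1) ∉ F2 := by
        intro hmem
        obtain ⟨p, hp, heq⟩ := Finset.mem_image.mp hmem
        have hpmem := (Finset.mem_filter.mp hp).1
        have hpM : psi pos p.2 = M2 := hS2psi _ (Finset.mem_product.mp hpmem).2
        have h1 : Wt pos p.1 + M2 = Wt pos itop + M1 := by
          have h0 := congrArg (psi pos) heq
          rwa [psi_add, psi_add, psi_ee, psi_ee, hpM] at h0
        have h2 : Wt pos p.1 ≤ Wt pos itop := hitopmax _ (Finset.mem_product.mp hpmem).1
        omega
      refine ⟨insert (ee itop + s1) F2, ?_, ?_⟩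
      · rw [Finset.card_insert_of_notMem hdtop, hF2card]
        have h1 : 1 ≤ a := Finset.card_pos.mpr hpne
        have h2 : (a-1) * 2 ≤ (a-1) * S2.card := Nat.mul_le_mul_left _ hB1
        have h3 : (a-1) * S2.card + S2.card = a * S2.card := by
          have h4 : a - 1 + 1 = a := by omega
          calc (a-1) * S2.card + S2.card = (a - 1 + 1) * S2.card := by ring
            _ = a * S2.card := by rw [h4]
        omega
      · intro d hd
        rcases Finset.mem_insert.mp hd with rfl | hd2
        · exact point_pos pos Q hnn hitoppos hs1S (Htop itop hitoppos s1 hs1S rfl)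
        · obtain ⟨p, hp, rfl⟩ := Finset.mem_image.mp hd2
          exact hGoodPos p hp
    · -- Subcase B2 : unique second-layer element s2
      have hS2card : S2.card = 1 := by
        have : 1 ≤ S2.card := Finset.card_pos.mpr ⟨s2, hs2S2⟩
        omega
      have hS2eq : ∀ t ∈ S2, t = s2 := fun t ht =>
        Finset.card_le_one.mp (le_of_eq hS2card) t ht s2 hs2S2
      set F1 := posF.image (fun i => ee i + s1) with hF1def
      have hF1card : F1.card = a := Finset.card_image_of_injOn (by
        intro p _ q _ heq
        exact ee_inj (add_right_cancel heq))
      have hF1pos : ∀ d ∈ F1,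
          0 < ((∑ k : Fin N, C (if pos k then (1:ℝ) else -1) * X k) * Q).coeff d := by
        intro d hd
        obtain ⟨i, hi, rfl⟩ := Finset.mem_image.mp hd
        exact point_pos pos Q hnn (hposmem _ hi) hs1S (Htop i (hposmem _ hi) s1 hs1S rfl)
      set F2 := Good.image (fun (p : Fin N × (Fin N →₀ ℕ)) => ee p.1 + p.2) with hF2def
      have hF2card : F2.card = Good.card := Finset.card_image_of_injOn hGoodInj
      have hF2pos : ∀ d ∈ F2,
          0 < ((∑ k : Fin N, C (if pos k then (1:ℝ) else -1) * X k) * Q).coeff d := by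
        intro d hd
        obtain ⟨p, hp, rfl⟩ := Finset.mem_image.mp hd
        exact hGoodPos p hp
      rw [hS2card, mul_one] at hGB
      have hBad1 : Bad.card ≤ 1 := le_trans hBadcard (le_of_eq hS2card)
      by_cases hbadex : Bad.Nonempty
      · -- a bad pair exists : F1 and F2 are disjoint
        obtain ⟨pb, hpb⟩ := hbadex
        obtain ⟨hpbmem, hpbbad⟩ := Finset.mem_filter.mp hpb
        push_neg at hpbbad
        obtain ⟨j0, hj0, hbeq⟩ := hpbbad
        have hpb2 : pb.2 = s2 := hS2eq _ (Finset.mem_product.mp hpbmem).2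
        have hpbpos : pos pb.1 := hposmem _ (Finset.mem_product.mp hpbmem).1
        rw [hpb2] at hbeq
        have hdisj : Disjoint F1 F2 := by
          rw [Finset.disjoint_left]
          intro d hd1 hd2
          obtain ⟨i, hiF, hieq⟩ := Finset.mem_image.mp hd1
          obtain ⟨p, hp, hpeq⟩ := Finset.mem_image.mp hd2
          have hp2 : p.2 = s2 := hS2eq _ (Finset.mem_product.mp (Finset.mem_filter.mp hp).1).2
          have hppos2 : pos p.1 := hposmem _ (Finset.mem_product.mp (Finset.mem_filter.mp hp).1).1
          rw [hp2] at hpeq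
          have hceq : ee i + s1 = ee p.1 + s2 := hieq.trans hpeq.symm
          have h2 : ee i + ee pb.1 + s2 = ee j0 + ee p.1 + s2 := by
            rw [add_assoc, hbeq, add_assoc, ← hceq, add_left_comm]
          have hcomb : ee i + ee pb.1 = ee j0 + ee p.1 := add_right_cancel h2
          have hine : i ≠ j0 := fun h => hj0 (h ▸ hposmem _ hiF)
          have hpbne : pb.1 ≠ j0 := fun h => hj0 (h ▸ hpbpos)
          have hpne' : p.1 ≠ j0 := fun h => hj0 (h ▸ hppos2)
          have heval := DFunLike.congr_fun hcomb j0
          rw [ee_add_ee_apply, ee_add_ee_apply] at heval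
          rw [if_neg hine, if_neg hpbne, if_neg hpne', if_pos rfl] at heval
          omega
        refine ⟨F1 ∪ F2, ?_, ?_⟩
        · rw [Finset.card_union_of_disjoint hdisj, hF1card, hF2card]
          omega
        · intro d hd
          rcases Finset.mem_union.mp hd with h | h
          · exact hF1pos d h
          · exact hF2pos d h
      · -- no bad pair : Good is everything, intersection has at most one element
        have hBad0 : Bad.card = 0 := by
          rw [Finset.card_eq_zero]
          exact Finset.not_nonempty_iff_eq_empty.mp hbadex
        have hint : (F1 ∩ F2).card ≤ 1 := by
          rw [Finset.card_le_one]
          intro d1 hd1 d2 hd2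
          obtain ⟨hd1F1, hd1F2⟩ := Finset.mem_inter.mp hd1
          obtain ⟨hd2F1, hd2F2⟩ := Finset.mem_inter.mp hd2
          obtain ⟨i1, _, hie1⟩ := Finset.mem_image.mp hd1F1
          obtain ⟨p1, hp1, hpe1⟩ := Finset.mem_image.mp hd1F2
          obtain ⟨i2, _, hie2⟩ := Finset.mem_image.mp hd2F1
          obtain ⟨p2, hp2, hpe2⟩ := Finset.mem_image.mp hd2F2
          have hp12 : p1.2 = s2 := hS2eq _ (Finset.mem_product.mp (Finset.mem_filter.mp hp1).1).2
          have hp22 : p2.2 = s2 := hS2eq _ (Finset.mem_product.mp (Finset.mem_filter.mp hp2).1).2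
          rw [hp12] at hpe1
          rw [hp22] at hpe2
          have he1 : ee i1 + s1 = ee p1.1 + s2 := hie1.trans hpe1.symm
          have he2 : ee i2 + s1 = ee p2.1 + s2 := hie2.trans hpe2.symm
          have hne1 : p1.1 ≠ i1 := by
            intro h
            rw [← h] at he1
            exact hs2ne (add_left_cancel he1).symm
          have h2 : ee i1 + ee p2.1 + s2 = ee i2 + ee p1.1 + s2 := by
            rw [add_assoc, ← he2, add_assoc, ← he1, add_left_comm]
          have hcomb2 : ee i1 + ee p2.1 = ee i2 + ee p1.1 := add_right_cancel h2
          have heval := DFunLike.congr_fun hcomb2 i1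
          rw [ee_add_ee_apply, ee_add_ee_apply] at heval
          rw [if_pos rfl, if_neg hne1] at heval
          have hi21 : i2 = i1 := by
            by_contra hne
            rw [if_neg hne] at heval
            split_ifs at heval <;> omega
          rw [← hie1, ← hie2, hi21]
        have hcui := Finset.card_union_add_card_inter F1 F2
        refine ⟨F1 ∪ F2, ?_, ?_⟩
        · rw [hF1card, hF2card] at hcui
          omega
        · intro d hd
          rcases Finset.mem_union.mp hd with h | h
          · exact hF1pos d h
          · exact hF2pos d h

  
end

end Statement7Aux

open Statement7Aux

/-- For `r ≥ 3` and a homogeneous polynomial `Q` in `x₁, …, x_{2r}` with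
nonnegative coefficients and at least two monomials, the polynomial
`P = (x₁ + ⋯ + x_r − x_{r+1} − ⋯ − x_{2r}) * Q` has at least `2r + 3` monomials;
in particular it has more than `2r + 2` monomials. -/
theorem statement7 (r : ℕ) (hr : 3 ≤ r)
    (Q : MvPolynomial (Fin (2 * r)) ℝ)
    (n : ℕ) (hhom : Q.IsHomogeneous n)
    (hnonneg : ∀ d, 0 ≤ Q.coeff d)
    (hcard : 2 ≤ Q.support.card) :
    2 * r + 3 ≤
        (((∑ i : Fin (2 * r), C (if (i : ℕ) < r then (1 : ℝ) else -1) * X i) * Q).support).card ∧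
      2 * r + 2 <
        (((∑ i : Fin (2 * r), C (if (i : ℕ) < r then (1 : ℝ) else -1) * X i) * Q).support).card := by
  classical
  obtain ⟨F1, hF1c, hF1⟩ := core (fun i : Fin (2*r) => (i:ℕ) < r) Q hnonneg hcard
  obtain ⟨F2, hF2c, hF2⟩ := core (fun i : Fin (2*r) => ¬ ((i:ℕ) < r)) Q hnonneg hcard
  have hc1 : (Finset.univ.filter fun i : Fin (2*r) => (i:ℕ) < r).card = r := by
    have himg : (Finset.univ.filter fun i : Fin (2*r) => (i:ℕ) < r).image Fin.val
        = Finset.range r := by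
      ext k
      simp only [Finset.mem_image, Finset.mem_filter, Finset.mem_univ, true_and,
        Finset.mem_range]
      constructor
      · rintro ⟨i, hi, rfl⟩; exact hi
      · intro hk
        exact ⟨⟨k, by omega⟩, hk, rfl⟩
    have h2 := Finset.card_image_of_injective
      (Finset.univ.filter fun i : Fin (2*r) => (i:ℕ) < r) Fin.val_injective
    rw [himg, Finset.card_range] at h2
    exact h2.symm
  have hc2 : (Finset.univ.filter fun i : Fin (2*r) => ¬ ((i:ℕ) < r)).card = r := by
    have h3 := Finset.card_filter_add_card_filter_not
      (s := (Finset.univ : Finset (Fin (2*r)))) (p := fun i => (i:ℕ) < r)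
    rw [Finset.card_univ, Fintype.card_fin, hc1] at h3
    omega
  have hLneg : (∑ i : Fin (2*r), C (if ¬((i:ℕ) < r) then (1:ℝ) else -1) * X i)
      = - ∑ i : Fin (2*r), C (if (i:ℕ) < r then (1:ℝ) else -1) * X i := by
    have hterm : ∀ i : Fin (2*r), C (if ¬((i:ℕ) < r) then (1:ℝ) else -1) * X i
        = -(C (if (i:ℕ) < r then (1:ℝ) else -1) * (X i : MvPolynomial (Fin (2*r)) ℝ)) := by
      intro i
      by_cases h : (i:ℕ) < r <;> simp [h, map_neg, neg_mul]
    rw [Finset.sum_congr rfl (fun i _ => hterm i)]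
    exact Finset.sum_neg_distrib _
  have hF1' : ∀ d ∈ F1,
      0 < (((∑ i : Fin (2 * r), C (if (i : ℕ) < r then (1 : ℝ) else -1) * X i) * Q)).coeff d :=
    hF1
  have hF2' : ∀ d ∈ F2,
      (((∑ i : Fin (2 * r), C (if (i : ℕ) < r then (1 : ℝ) else -1) * X i) * Q)).coeff d < 0 := by
    intro d hd
    have h := hF2 d hd
    rw [hLneg, neg_mul, coeff_neg] at h
    linarith
  have hdisj : Disjoint F1 F2 := by
    rw [Finset.disjoint_left]
    intro d h1 h2
    have := hF1' d h1
    have := hF2' d h2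
    linarith
  have hsub : F1 ∪ F2 ⊆
      (((∑ i : Fin (2 * r), C (if (i : ℕ) < r then (1 : ℝ) else -1) * X i) * Q)).support := by
    intro d hd
    rw [mem_support_iff]
    rcases Finset.mem_union.mp hd with h | h
    · exact ne_of_gt (hF1' d h)
    · exact ne_of_lt (hF2' d h)
  have hcardle := Finset.card_le_card hsub
  rw [Finset.card_union_of_disjoint hdisj] at hcardle
  rw [hc1] at hF1c
  rw [hc2] at hF2c
  constructor
  · omega
  · omega
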